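/- arXiv:1505.07547 — 5 statements merged into one kernel-verified Lean document; each statement's English description precedes it below -/
import Mathlib

section
/- Let q be a prime power, let F_q ⊆ F_{q^m} be finite fields, and let 𝔞 = (a_1,...,a_m) ∈ F_{q^m}^m be such that a_1,...,a_m form a basis of F_{q^m} over F_q. Let γ_𝔞(T) = (γ_1(T),...,γ_m(T)) where γ_k(T) = Σ_{i=0}^{m−1} a_k^{q^i}·T^{q^i} ∈ F_{q^m}[T], so that γ_k(t) = Tr_{F_{q^m}/F_q}(a_k·t) for every t ∈ F_{q^m}. Let P ∈ F_q[X_1,...,X_m], let l be a vector of nonnegative integers, and let Q_l(T) = P^{(l)}(γ_1(T),...,γ_m(T)) ∈ F_{q^m}[T]. Then for every t ∈ F_{q^m} and every nonnegative integer j < q, the j-th Hasse derivative of Q_l satisfies Q_l^{(j)}(t) = Σ_{i : wt(i) = j} binom(i+l, l) · P^{(i+l)}(γ_𝔞(t)) · 𝔞^i, where 𝔞^i = ∏_k a_k^{i_k}. -/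
/-- The Hasse derivative of a multivariate polynomial `P` with respect to the index
vector `i : Fin m → ℕ`: the coefficient of `Z^i` in `P(X + Z)`. -/
noncomputable def mvHasseDeriv {F : Type*} [CommSemiring F] {m : ℕ}
    (i : Fin m → ℕ) (P : MvPolynomial (Fin m) F) : MvPolynomial (Fin m) F :=
  MvPolynomial.coeff (Finsupp.equivFunOnFinite.symm i)
    (MvPolynomial.eval₂ (MvPolynomial.C.comp MvPolynomial.C)
      (fun k => MvPolynomial.C (MvPolynomial.X k) + MvPolynomial.X k) P)

/-- The multiplicity of `P` at a point `a`: the largest `M` (possibly `⊤`) such that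
all Hasse derivatives of `P` of weight `< M` vanish at `a`. -/
noncomputable def mvMult {F : Type*} [CommSemiring F] {m : ℕ}
    (P : MvPolynomial (Fin m) F) (a : Fin m → F) : ℕ∞ :=
  sSup {M : ℕ∞ | ∀ i : Fin m → ℕ, ((∑ k, i k : ℕ) : ℕ∞) < M →
    MvPolynomial.eval a (mvHasseDeriv i P) = 0}

lemma symm_coe {α M : Type*} [Finite α] [AddCommMonoid M] (g : α → M) (k : α) :
    (Finsupp.equivFunOnFinite.symm g) k = g k := rfl

open MvPolynomial Finset in
lemma mvHasseDeriv_monomial {F : Type*} [CommSemiring F] {m : ℕ}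
    (i : Fin m → ℕ) (d : Fin m →₀ ℕ) (c : F) :
    mvHasseDeriv i (monomial d c) =
      monomial (d - Finsupp.equivFunOnFinite.symm i)
        ((∏ k, (d k).choose (i k)) * c) := by
  classical
  rw [mvHasseDeriv, eval₂_monomial]
  rw [Finsupp.prod_fintype _ _ (fun k => pow_zero _)]
  have hfac : ∀ k : Fin m, (C (X k) + X k : MvPolynomial (Fin m) (MvPolynomial (Fin m) F)) ^ d k
      = ∑ jj ∈ range (d k + 1),
        X k ^ jj * C (X k ^ (d k - jj)) * ((d k).choose jj : MvPolynomial (Fin m) (MvPolynomial (Fin m) F)) := by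
    intro k
    rw [add_comm, add_pow]
    refine Finset.sum_congr rfl fun jj _ => ?_
    rw [map_pow]
  simp_rw [hfac]
  rw [Finset.prod_univ_sum]
  rw [show (C.comp C) c = (C (C c) : MvPolynomial (Fin m) (MvPolynomial (Fin m) F)) from rfl]
  rw [coeff_C_mul, coeff_sum]
  have hterm : ∀ g ∈ Fintype.piFinset (fun k : Fin m => range (d k + 1)),
      coeff (Finsupp.equivFunOnFinite.symm i)
        (∏ k, (X k ^ g k * C (X k ^ (d k - g k)) * ((d k).choose (g k) : MvPolynomial (Fin m) (MvPolynomial (Fin m) F))))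
      = if g = i then (∏ k, (X k ^ (d k - i k) : MvPolynomial (Fin m) F)) * ((∏ k, (d k).choose (i k) : ℕ) : MvPolynomial (Fin m) F) else 0 := by
    intro g _
    have hmon : (∏ k, (X k ^ g k * C (X k ^ (d k - g k)) * ((d k).choose (g k) : MvPolynomial (Fin m) (MvPolynomial (Fin m) F))))
        = monomial (Finsupp.equivFunOnFinite.symm g)
            ((∏ k, (X k ^ (d k - g k) : MvPolynomial (Fin m) F)) * ((∏ k, (d k).choose (g k) : ℕ) : MvPolynomial (Fin m) F)) := by
      rw [prod_mul_distrib, prod_mul_distrib]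
      have h1 : (∏ k, (X k : MvPolynomial (Fin m) (MvPolynomial (Fin m) F)) ^ g k)
          = monomial (Finsupp.equivFunOnFinite.symm g) 1 := by
        rw [monomial_eq, C_1, one_mul, Finsupp.prod_pow]
        exact Finset.prod_congr rfl fun k _ => by rw [symm_coe]
      have h2 : (∏ k, (C (X k ^ (d k - g k)) : MvPolynomial (Fin m) (MvPolynomial (Fin m) F)))
          = C (∏ k, (X k ^ (d k - g k) : MvPolynomial (Fin m) F)) := by
        rw [map_prod]
      have h3 : (∏ k, ((d k).choose (g k) : MvPolynomial (Fin m) (MvPolynomial (Fin m) F)))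
          = C (((∏ k, (d k).choose (g k) : ℕ) : MvPolynomial (Fin m) F)) := by
        rw [C_eq_coe_nat, Nat.cast_prod]
      rw [h1, h2, h3, mul_assoc, ← map_mul, mul_comm, C_mul_monomial, mul_one]
    rw [hmon, coeff_monomial]
    by_cases hg : g = i
    · subst hg; simp
    · have hne : Finsupp.equivFunOnFinite.symm g ≠ Finsupp.equivFunOnFinite.symm i := by
        simpa using hg
      simp [hne, hg]
  rw [Finset.sum_congr rfl hterm, Finset.sum_ite_eq' (Fintype.piFinset fun k => range (d k + 1)) i]
  by_cases hi : i ∈ Fintype.piFinset fun k : Fin m => range (d k + 1)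
  · rw [if_pos hi, monomial_eq, Finsupp.prod_pow]
    have : ∀ k : Fin m, (d - Finsupp.equivFunOnFinite.symm i) k = d k - i k := by
      intro k; rw [Finsupp.tsub_apply, symm_coe]
    simp_rw [this]
    rw [map_mul, C_eq_coe_nat]
    ring
  · rw [if_neg hi]
    have : ∃ k : Fin m, d k < i k := by
      simp only [Fintype.mem_piFinset, Finset.mem_range, not_forall, not_lt] at hi
      obtain ⟨k, hk⟩ := hi
      exact ⟨k, by omega⟩
    obtain ⟨k, hk⟩ := this
    rw [Finset.prod_eq_zero (Finset.mem_univ k) (Nat.choose_eq_zero_of_lt hk)]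
    simp

open Nat in
lemma choose_trinomial (n i l : ℕ) :
    (n + i).choose i * ((n + i) + l).choose l
      = (i + l).choose l * (n + (i + l)).choose (i + l) := by
  have key : ∀ x y : ℕ, (x + y).choose y * (x ! * y !) = (x + y)! := by
    intro x y
    rw [← Nat.add_choose_mul_factorial_mul_factorial x y]; ring
  have h1 : ((n + i).choose i * ((n + i) + l).choose l) * (n ! * i ! * l !)
      = (n + i + l)! := by
    have a1 := key n i
    have a2 := key (n + i) l
    calc ((n + i).choose i * ((n + i) + l).choose l) * (n ! * i ! * l !)
        = ((n + i) + l).choose l * ((n + i).choose i * (n ! * i !)) * l ! := by ring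
      _ = ((n + i) + l).choose l * ((n + i)! * l !) := by rw [a1]; ring
      _ = (n + i + l)! := by rw [← a2]
  have h2 : ((i + l).choose l * (n + (i + l)).choose (i + l)) * (n ! * i ! * l !)
      = (n + i + l)! := by
    have a1 := key i l
    have a2 := key n (i + l)
    calc ((i + l).choose l * (n + (i + l)).choose (i + l)) * (n ! * i ! * l !)
        = (n + (i + l)).choose (i + l) * ((i + l).choose l * (i ! * l !)) * n ! := by ring
      _ = (n + (i + l)).choose (i + l) * ((i + l)! * n !) := by rw [a1]; ring
      _ = (n + (i + l)).choose (i + l) * (n ! * (i + l)!) := by ring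
      _ = (n + (i + l))! := a2
      _ = (n + i + l)! := by rw [Nat.add_assoc]
  have hpos : 0 < n ! * i ! * l ! := by positivity
  exact Nat.eq_of_mul_eq_mul_right hpos (h1.trans h2.symm)

open MvPolynomial in
lemma mvHasseDeriv_sum {F : Type*} [CommSemiring F] {m : ℕ} (i : Fin m → ℕ)
    {α : Type*} (s : Finset α) (f : α → MvPolynomial (Fin m) F) :
    mvHasseDeriv i (∑ x ∈ s, f x) = ∑ x ∈ s, mvHasseDeriv i (f x) := by
  simp only [mvHasseDeriv]
  rw [MvPolynomial.eval₂_sum, MvPolynomial.coeff_sum]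


lemma symm_add {m : ℕ} (f g : Fin m → ℕ) :
    Finsupp.equivFunOnFinite.symm (f + g)
      = Finsupp.equivFunOnFinite.symm f + Finsupp.equivFunOnFinite.symm g := by
  ext k; simp [symm_coe, Finsupp.add_apply]

open MvPolynomial in
lemma coeff_mvHasseDeriv {F : Type*} [CommSemiring F] {m : ℕ} (i : Fin m → ℕ)
    (P : MvPolynomial (Fin m) F) (d : Fin m →₀ ℕ) :
    MvPolynomial.coeff d (mvHasseDeriv i P)
      = (∏ k, (d k + i k).choose (i k))
        * MvPolynomial.coeff (d + Finsupp.equivFunOnFinite.symm i) P := by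
  classical
  conv_lhs => rw [P.as_sum]
  rw [mvHasseDeriv_sum, coeff_sum]
  simp_rw [mvHasseDeriv_monomial, coeff_monomial]
  have hterm : ∀ d' ∈ P.support,
      (if d' - Finsupp.equivFunOnFinite.symm i = d
        then (∏ k, (d' k).choose (i k)) * coeff d' P else 0)
      = (if d' = d + Finsupp.equivFunOnFinite.symm i
        then (∏ k, (d k + i k).choose (i k)) * coeff d' P else 0) := by
    intro d' _
    by_cases hd' : d' = d + Finsupp.equivFunOnFinite.symm i
    · subst hd'
      rw [if_pos (add_tsub_cancel_right _ _), if_pos rfl]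
      simp [Finsupp.add_apply, symm_coe]
    · rw [if_neg hd']
      by_cases hsub : d' - Finsupp.equivFunOnFinite.symm i = d
      · rw [if_pos hsub]
        have : ∃ k : Fin m, d' k < i k := by
          by_contra hno
          push_neg at hno
          apply hd'
          have hle : Finsupp.equivFunOnFinite.symm i ≤ d' := by
            rw [Finsupp.le_def]
            intro k; rw [symm_coe]; exact hno k
          rw [← hsub, tsub_add_cancel_of_le hle]
        obtain ⟨k, hk⟩ := this
        rw [Finset.prod_eq_zero (Finset.mem_univ k) (Nat.choose_eq_zero_of_lt hk)]
        simp
      · rw [if_neg hsub]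
  rw [Finset.sum_congr rfl hterm, Finset.sum_ite_eq' P.support]
  by_cases hmem : d + Finsupp.equivFunOnFinite.symm i ∈ P.support
  · rw [if_pos hmem]
  · rw [if_neg hmem, MvPolynomial.notMem_support_iff.mp hmem, mul_zero]

open MvPolynomial in
lemma mvHasseDeriv_comp {F : Type*} [CommSemiring F] {m : ℕ} (i l : Fin m → ℕ)
    (P : MvPolynomial (Fin m) F) :
    mvHasseDeriv i (mvHasseDeriv l P)
      = (∏ k, (i k + l k).choose (l k)) • mvHasseDeriv (i + l) P := by
  classical
  apply MvPolynomial.ext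
  intro d
  rw [coeff_mvHasseDeriv, coeff_mvHasseDeriv, coeff_smul, coeff_mvHasseDeriv,
    symm_add, nsmul_eq_mul, ← add_assoc, ← mul_assoc, ← mul_assoc]
  congr 1
  rw [← Nat.cast_mul, ← Nat.cast_mul]
  congr 1
  rw [← Finset.prod_mul_distrib, ← Finset.prod_mul_distrib]
  apply Finset.prod_congr rfl
  intro k _
  simp only [Finsupp.add_apply, symm_coe, Pi.add_apply]
  exact choose_trinomial (d k) (i k) (l k)

open MvPolynomial in
lemma mvHasseDeriv_coe {F : Type*} [CommSemiring F] {m : ℕ} (d : Fin m →₀ ℕ)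
    (P : MvPolynomial (Fin m) F) :
    mvHasseDeriv (⇑d) P
      = coeff d (eval₂ (C.comp C) (fun k => C (X k) + X k) P) := by
  rw [mvHasseDeriv, Finsupp.equivFunOnFinite_symm_coe]

open MvPolynomial in
lemma taylor_mv {R A : Type*} [CommSemiring R] [CommSemiring A] [Algebra R A] {m : ℕ}
    (P : MvPolynomial (Fin m) R) (x y : Fin m → A) :
    (aeval (fun k => x k + y k)) P
      = ∑ d ∈ (eval₂ (C.comp C) (fun k => C (X k) + X k) P).support,
          aeval x (mvHasseDeriv (⇑d) P) * ∏ k, y k ^ d k := by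
  classical
  set D : MvPolynomial (Fin m) (MvPolynomial (Fin m) R) :=
    eval₂ (C.comp C) (fun k => C (X k) + X k) P with hD
  set φ : MvPolynomial (Fin m) (MvPolynomial (Fin m) R) →+* A :=
    eval₂Hom ((aeval x : MvPolynomial (Fin m) R →ₐ[R] A) : MvPolynomial (Fin m) R →+* A) y
    with hφ
  have h1 : φ D = ∑ d ∈ D.support,
      aeval x (mvHasseDeriv (⇑d) P) * ∏ k, y k ^ d k := by
    rw [hφ, coe_eval₂Hom, eval₂_eq']
    refine Finset.sum_congr rfl fun d _ => ?_
    rw [mvHasseDeriv_coe, ← hD]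
    rfl
  have h2 : φ D = aeval (fun k => x k + y k) P := by
    rw [hD, eval₂_comp_left φ]
    have hcomp : φ.comp (C.comp C) = algebraMap R A := by
      refine RingHom.ext fun r => ?_
      simp [hφ]
    rw [hcomp]
    have hg : (⇑φ ∘ fun k => C (X k) + X k) = fun k => x k + y k := by
      funext k
      simp [hφ]
    rw [hg, ← aeval_def]
  rw [← h2, h1]

open Polynomial in
lemma gamma_split {K : Type*} [CommRing K] (q m : ℕ) (hq : 1 ≤ q) (hm : 1 ≤ m)
    (b : ℕ → K) :
    ∃ E : K[X], ∑ e ∈ Finset.range m, C (b e) * X ^ q ^ e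
      = C (b 0) * X + X ^ q * E := by
  obtain ⟨m', rfl⟩ : ∃ m', m = m' + 1 := ⟨m - 1, by omega⟩
  refine ⟨∑ e ∈ Finset.range m', C (b (e + 1)) * X ^ (q ^ (e + 1) - q), ?_⟩
  rw [Finset.sum_range_succ']
  rw [pow_zero, pow_one, Finset.mul_sum, add_comm]
  congr 1
  refine Finset.sum_congr rfl fun e _ => ?_
  have hle : q ≤ q ^ (e + 1) := by
    calc q = q ^ 1 := (pow_one q).symm
    _ ≤ q ^ (e + 1) := Nat.pow_le_pow_right hq (by omega)
  rw [← mul_assoc, mul_comm (X ^ q : K[X]) (C (b (e+1))), mul_assoc, ← pow_add]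
  congr 2
  omega

open Polynomial in
lemma coeff_prod_gamma {K : Type*} [CommRing K] {m : ℕ} (q j : ℕ) (hj : j < q)
    (γ : Fin m → K[X]) (a : Fin m → K)
    (hsplit : ∀ k, ∃ E : K[X], γ k = C (a k) * X + X ^ q * E)
    (d : Fin m →₀ ℕ) :
    (∏ k, γ k ^ d k).coeff j
      = if (∑ k, d k) = j then ∏ k, a k ^ d k else 0 := by
  classical
  set I : Ideal K[X] := Ideal.span {(X : K[X]) ^ q} with hI
  have hmem : ∀ p : K[X], (X : K[X]) ^ q * p ∈ I := fun p =>
    Ideal.mul_mem_right p I (Ideal.subset_span rfl)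
  have key : ∃ E : K[X], ∏ k, γ k ^ d k
      = C (∏ k, a k ^ d k) * X ^ (∑ k, d k) + X ^ q * E := by
    have hquot : Ideal.Quotient.mk I (∏ k, γ k ^ d k)
        = Ideal.Quotient.mk I (C (∏ k, a k ^ d k) * X ^ (∑ k, d k)) := by
      have hγk : ∀ k, Ideal.Quotient.mk I (γ k) = Ideal.Quotient.mk I (C (a k) * X) := by
        intro k
        obtain ⟨E, hE⟩ := hsplit k
        rw [hE, map_add, Ideal.Quotient.eq_zero_iff_mem.mpr (hmem E), add_zero]
      have hpoly : (∏ x, (C (a x) * X) ^ d x : K[X])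
          = C (∏ k, a k ^ d k) * X ^ (∑ k, d k) := by
        simp_rw [mul_pow]
        rw [Finset.prod_mul_distrib, Finset.prod_pow_eq_pow_sum]
        congr 1
        rw [map_prod]
        exact Finset.prod_congr rfl fun k _ => (map_pow C (a k) (d k)).symm
      rw [map_prod]
      simp_rw [map_pow, hγk, ← map_pow]
      rw [← map_prod, hpoly]
    rw [Ideal.Quotient.eq] at hquot
    rw [hI, Ideal.mem_span_singleton] at hquot
    obtain ⟨E, hE⟩ := hquot
    exact ⟨E, by linear_combination hE⟩
  obtain ⟨E, hE⟩ := key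
  rw [hE, coeff_add, coeff_C_mul, coeff_X_pow]
  have hzero : ((X : K[X]) ^ q * E).coeff j = 0 := by
    rw [mul_comm, coeff_mul_X_pow']
    rw [if_neg (by omega)]
  rw [hzero, add_zero]
  by_cases h : (∑ k, d k) = j
  · rw [if_pos h, if_pos h.symm, mul_one]
  · rw [if_neg h, if_neg (fun hh => h hh.symm), mul_zero]

open Polynomial MvPolynomial in
lemma aeval_const_poly {K : Type*} [CommSemiring K] {m : ℕ} (b : Fin m → K)
    (p : MvPolynomial (Fin m) K) :
    MvPolynomial.aeval (fun k => (Polynomial.C (b k) : K[X])) p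
      = Polynomial.C (MvPolynomial.eval b p) := by
  rw [MvPolynomial.aeval_def, Polynomial.algebraMap_eq]
  rw [show MvPolynomial.eval b p = MvPolynomial.eval₂ (RingHom.id K) b p from rfl]
  rw [MvPolynomial.eval₂_comp_left (Polynomial.C : K →+* K[X]) (RingHom.id K) b p,
    RingHom.comp_id]
  rfl


/-- **Derivatives of the restriction of a derivative to a trace curve.**
Let `F = F_q ⊆ K = F_{q^m}`, let `a_1, …, a_m ∈ K` be a basis of `K` over `F`, and let
`γ_k(T) = ∑_{e<m} a_k^{q^e} T^{q^e}` (so `γ_k(t) = Tr(a_k·t)`). For `P ∈ F[X_1,…,X_m]` and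
`Q_l(T) = P^{(l)}(γ_1(T), …, γ_m(T))`, every `t ∈ K` and every `j < q` satisfy
`Q_l^{(j)}(t) = ∑_{i : wt(i) = j} binom(i+l, l) · P^{(i+l)}(γ(t)) · a^i`. -/
theorem hasseDeriv_restriction_to_trace_curve {F K : Type*} [Field F] [Fintype F]
    [Field K] [Fintype K] [Algebra F K] {m : ℕ}
    (a : Fin m → K) (ha : LinearIndependent F a)
    (ha' : Submodule.span F (Set.range a) = ⊤)
    (γ : Fin m → Polynomial K)
    (hγ : ∀ k, γ k = ∑ e ∈ Finset.range m,
      Polynomial.C (a k ^ Fintype.card F ^ e) * Polynomial.X ^ Fintype.card F ^ e)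
    (P : MvPolynomial (Fin m) F) (l : Fin m → ℕ)
    (Q : Polynomial K)
    (hQ : Q = MvPolynomial.aeval γ
      (mvHasseDeriv l (MvPolynomial.map (algebraMap F K) P)))
    (t : K) (j : ℕ) (hj : j < Fintype.card F) :
    (Polynomial.hasseDeriv j Q).eval t =
      ∑ i ∈ Finset.Nat.antidiagonalTuple m j,
        ((∏ k, (i k + l k).choose (l k) : ℕ) : K) *
          MvPolynomial.eval (fun k => (γ k).eval t)
            (mvHasseDeriv (i + l) (MvPolynomial.map (algebraMap F K) P)) *
          ∏ k, a k ^ i k := by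
  classical
  set q := Fintype.card F with hqdef
  set PK := MvPolynomial.map (algebraMap F K) P with hPK
  set P' := mvHasseDeriv l PK with hP'
  set b : Fin m → K := fun k => (γ k).eval t with hb
  have hq1 : 1 ≤ q := Fintype.card_pos
  -- characteristic facts
  set p := ringChar F with hpdef
  haveI : CharP F p := ringChar.charP F
  haveI hpK : CharP K p := charP_of_injective_algebraMap
    (algebraMap F K).injective p
  obtain ⟨s, hsp, hcard⟩ := FiniteField.card F p
  haveI : Fact p.Prime := ⟨hsp⟩
  -- Frobenius
  have hfrob : ∀ e : ℕ, ((Polynomial.X + Polynomial.C t : Polynomial K)) ^ q ^ e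
      = Polynomial.X ^ q ^ e + Polynomial.C (t ^ q ^ e) := by
    intro e
    have hqe : q ^ e = p ^ (s * e) := by rw [hqdef, hcard, ← pow_mul]
    rw [hqe, add_pow_char_pow, ← Polynomial.C_pow]
  -- composing γ with X + C t
  have hγcomp : ∀ k, (γ k).comp (Polynomial.X + Polynomial.C t)
      = Polynomial.C (b k) + γ k := by
    intro k
    conv_lhs => rw [hγ k]
    rw [Polynomial.comp, Polynomial.eval₂_finset_sum]
    simp_rw [Polynomial.eval₂_mul, Polynomial.eval₂_C, Polynomial.eval₂_X_pow, hfrob,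
      mul_add]
    rw [Finset.sum_add_distrib, add_comm]
    congr 1
    · have hbk : (Polynomial.C (b k) : Polynomial K)
          = ∑ e ∈ Finset.range m, Polynomial.C (a k ^ q ^ e * t ^ q ^ e) := by
        rw [show b k = Polynomial.eval t (γ k) from rfl, hγ k,
          Polynomial.eval_finset_sum, map_sum]
        refine Finset.sum_congr rfl fun e _ => ?_
        rw [Polynomial.eval_mul, Polynomial.eval_C, Polynomial.eval_pow,
          Polynomial.eval_X]
      rw [hbk]
      exact Finset.sum_congr rfl fun e _ => by rw [← Polynomial.C_mul]
    · exact (hγ k).symm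
  -- taylor expansion of Q
  have htaylor : Polynomial.taylor t Q
      = MvPolynomial.aeval (fun k => Polynomial.C (b k) + γ k) P' := by
    rw [Polynomial.taylor_apply, hQ]
    rw [Polynomial.comp_eq_aeval]
    have hcomp := MvPolynomial.comp_aeval
      (φ := (Polynomial.aeval (Polynomial.X + Polynomial.C t) :
        Polynomial K →ₐ[K] Polynomial K)) (f := γ)
    have := DFunLike.congr_fun hcomp P'
    rw [show (Polynomial.aeval (Polynomial.X + Polynomial.C t))
        ((MvPolynomial.aeval γ) P')
      = (Polynomial.aeval (Polynomial.X + Polynomial.C t) :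
        Polynomial K →ₐ[K] Polynomial K).comp (MvPolynomial.aeval γ) P' from rfl]
    rw [this]
    have harg : (fun i => (Polynomial.aeval (Polynomial.X + Polynomial.C t)) (γ i))
        = fun k => Polynomial.C (b k) + γ k := by
      funext k
      rw [← hγcomp k, Polynomial.comp_eq_aeval]
    rw [harg]
  -- main computation
  rw [← Polynomial.taylor_coeff, htaylor]
  have hT := taylor_mv P' (fun k => (Polynomial.C (b k) : Polynomial K)) γ
  rw [hT, Polynomial.finset_sum_coeff]
  have hsplitγ : ∀ k, ∃ E, γ k
      = Polynomial.C (a k) * Polynomial.X + Polynomial.X ^ q * E := by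
    intro k
    obtain ⟨E, hE⟩ := gamma_split q m hq1 k.pos (fun e => a k ^ q ^ e)
    refine ⟨E, ?_⟩
    rw [hγ k, hE, pow_zero, pow_one]
  have hterm : ∀ d ∈ (MvPolynomial.eval₂ (MvPolynomial.C.comp MvPolynomial.C)
      (fun k => MvPolynomial.C (MvPolynomial.X k) + MvPolynomial.X k) P').support,
      ((MvPolynomial.aeval fun k => (Polynomial.C (b k) : Polynomial K))
          (mvHasseDeriv (⇑d) P') * ∏ k, γ k ^ d k).coeff j
      = MvPolynomial.eval b (mvHasseDeriv (⇑d) P')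
          * (if (∑ k, d k) = j then ∏ k, a k ^ d k else 0) := by
    intro d _
    rw [aeval_const_poly, Polynomial.coeff_C_mul,
      coeff_prod_gamma q j hj γ a hsplitγ d]
  rw [Finset.sum_congr rfl hterm]
  simp_rw [mul_ite, mul_zero]
  rw [← Finset.sum_filter]
  -- reindexing
  set S := (MvPolynomial.eval₂ (MvPolynomial.C.comp MvPolynomial.C)
      (fun k => MvPolynomial.C (MvPolynomial.X k) + MvPolynomial.X k) P').support
    with hS
  set g : (Fin m → ℕ) → K :=
    fun i => MvPolynomial.eval b (mvHasseDeriv i P') * ∏ k, a k ^ i k with hg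
  have hRHS : ∀ i : Fin m → ℕ,
      ((∏ k, (i k + l k).choose (l k) : ℕ) : K)
        * MvPolynomial.eval b (mvHasseDeriv (i + l) PK) * ∏ k, a k ^ i k = g i := by
    intro i
    show ((∏ k, (i k + l k).choose (l k) : ℕ) : K)
        * MvPolynomial.eval b (mvHasseDeriv (i + l) PK) * ∏ k, a k ^ i k
      = MvPolynomial.eval b (mvHasseDeriv i P') * ∏ k, a k ^ i k
    have hcomp2 : mvHasseDeriv i P'
        = (∏ k, (i k + l k).choose (l k)) • mvHasseDeriv (i + l) PK :=
      mvHasseDeriv_comp i l PK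
    rw [hcomp2, map_nsmul, nsmul_eq_mul, mul_assoc]
  rw [show (∑ i ∈ Finset.Nat.antidiagonalTuple m j,
      ((∏ k, (i k + l k).choose (l k) : ℕ) : K)
        * MvPolynomial.eval b (mvHasseDeriv (i + l) PK) * ∏ k, a k ^ i k)
    = ∑ i ∈ Finset.Nat.antidiagonalTuple m j, g i
    from Finset.sum_congr rfl (fun i _ => hRHS i)]
  -- now: sum over filtered support equals sum over antidiagonalTuple
  rw [show (∑ d ∈ S.filter fun d => (∑ k, d k) = j,
      MvPolynomial.eval b (mvHasseDeriv (⇑d) P') * ∏ k, a k ^ d k)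
    = ∑ d ∈ S.filter fun d => (∑ k, d k) = j, g (Finsupp.equivFunOnFinite d)
    from rfl]
  rw [← Finset.sum_image (f := g) (g := ⇑Finsupp.equivFunOnFinite)
    (s := S.filter fun d => (∑ k, d k) = j)
    (fun x _ y _ h => Finsupp.equivFunOnFinite.injective h)]
  refine Finset.sum_subset ?_ ?_
  · intro i hi
    rw [Finset.mem_image] at hi
    obtain ⟨d, hd, rfl⟩ := hi
    rw [Finset.Nat.mem_antidiagonalTuple]
    exact (Finset.mem_filter.mp hd).2
  · intro i hi hnot
    have hd : Finsupp.equivFunOnFinite.symm i ∉ S := by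
      intro hmem
      apply hnot
      rw [Finset.mem_image]
      refine ⟨Finsupp.equivFunOnFinite.symm i, ?_, Finsupp.equivFunOnFinite.apply_symm_apply i⟩
      rw [Finset.mem_filter]
      refine ⟨hmem, ?_⟩
      rw [Finset.Nat.mem_antidiagonalTuple] at hi
      simpa [symm_coe] using hi
    have hzero : mvHasseDeriv i P' = 0 := by
      rw [mvHasseDeriv]
      exact MvPolynomial.notMem_support_iff.mp hd
    rw [hg]
    simp [hzero]
end

section
/- Let q be a prime power, let s be a positive integer, and let d < sq. Let P ∈ F_q[X] have degree at most d, and let r^{(0)},...,r^{(s−1)} : F_q → F_q be functions. Let A = {x ∈ F_q : r^{(i)}(x) = P^{(i)}(x) for all 0 ≤ i < s}, and suppose 2s·|A| > sq + d. Let E, N ∈ F_q[X] be polynomials with deg(E) ≤ (sq−d)/2 and deg(N) ≤ (sq+d)/2 such that for every x ∈ F_q and every 0 ≤ j < s, N^{(j)}(x) = Σ_{i=0}^{j} E^{(i)}(x)·r^{(j−i)}(x). Then N = E·P. (This is the correctness of the Berlekamp–Welch-style unique decoder for univariate multiplicity codes.) -/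
open Polynomial

lemma le_rootMultiplicity_of_hasseDeriv {F : Type*} [Field F] (Q : Polynomial F)
    (hQ : Q ≠ 0) (x : F) (s : ℕ)
    (h : ∀ i < s, (Polynomial.hasseDeriv i Q).eval x = 0) :
    s ≤ Q.rootMultiplicity x := by
  rw [Polynomial.le_rootMultiplicity_iff hQ]
  obtain ⟨g, hg⟩ : (X : Polynomial F) ^ s ∣ taylor x Q :=
    Polynomial.X_pow_dvd_iff.2 fun i hi => by rw [taylor_coeff]; exact h i hi
  have h2 := congrArg (taylor (-x)) hg
  rw [taylor_taylor, neg_add_cancel, taylor_zero, taylor_mul] at h2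
  have h3 : taylor (-x) ((X : Polynomial F) ^ s) = (X - C x) ^ s := by
    simp [taylor_apply, Polynomial.pow_comp, sub_eq_add_neg]
  rw [h2, h3]
  exact Dvd.intro _ rfl

/-- **Correctness of the Berlekamp–Welch style decoder for univariate multiplicity codes.**
Let `F = F_q`, `s > 0`, `d < sq`. Let `P` have degree at most `d` and let
`A = {x : r^{(i)}(x) = P^{(i)}(x) for all i < s}` satisfy `2s·|A| > sq + d`. If
`deg E ≤ (sq−d)/2`, `deg N ≤ (sq+d)/2` and `N^{(j)}(x) = ∑_{i≤j} E^{(i)}(x)·r^{(j−i)}(x)`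
for all `x ∈ F_q` and `j < s`, then `N = E·P`. -/
theorem berlekamp_welch_multiplicity {F : Type*} [Field F] [Fintype F] (s d : ℕ)
    (hs : 0 < s) (hd : d < s * Fintype.card F)
    (P : Polynomial F) (hP : P.natDegree ≤ d) (r : ℕ → F → F)
    (hA : s * Fintype.card F + d <
      2 * s * Nat.card {x : F // ∀ i < s, r i x = (Polynomial.hasseDeriv i P).eval x})
    (E N : Polynomial F)
    (hE : 2 * E.natDegree ≤ s * Fintype.card F - d)
    (hN : 2 * N.natDegree ≤ s * Fintype.card F + d)
    (heq : ∀ x : F, ∀ j < s, (Polynomial.hasseDeriv j N).eval x =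
      ∑ i ∈ Finset.range (j + 1), (Polynomial.hasseDeriv i E).eval x * r (j - i) x) :
    N = E * P := by
  classical
  set Q : Polynomial F := N - E * P with hQdef
  rw [← sub_eq_zero, ← hQdef]
  by_contra hQ
  -- Every point of A is a root of Q with multiplicity at least s
  have hvanish : ∀ x : F, (∀ i < s, r i x = (Polynomial.hasseDeriv i P).eval x) →
      ∀ j < s, (Polynomial.hasseDeriv j Q).eval x = 0 := by
    intro x hx j hj
    have : Polynomial.hasseDeriv j Q =
        Polynomial.hasseDeriv j N - Polynomial.hasseDeriv j (E * P) := by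
      simp [hQdef, map_sub]
    rw [this, Polynomial.eval_sub, heq x j hj, Polynomial.hasseDeriv_mul,
      Polynomial.eval_finset_sum, Finset.Nat.sum_antidiagonal_eq_sum_range_succ_mk]
    apply sub_eq_zero_of_eq
    refine Finset.sum_congr rfl fun i hi => ?_
    rw [Finset.mem_range, Nat.lt_succ_iff] at hi
    rw [hx (j - i) (lt_of_le_of_lt (Nat.sub_le j i) hj), Polynomial.eval_mul]
  -- degree bound on Q
  have hdegQ : 2 * Q.natDegree ≤ s * Fintype.card F + d := by
    have h1 : Q.natDegree ≤ max N.natDegree (E * P).natDegree :=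
      Polynomial.natDegree_sub_le _ _
    have h2 : (E * P).natDegree ≤ E.natDegree + P.natDegree :=
      Polynomial.natDegree_mul_le
    have h3 := le_trans h1 (max_le_max le_rfl h2)
    rcases le_total N.natDegree (E.natDegree + P.natDegree) with h | h
    · rw [max_eq_right h] at h3; omega
    · rw [max_eq_left h] at h3; omega
  -- the set A as a Finset
  set A : Finset F := Finset.univ.filter
    (fun x => ∀ i < s, r i x = (Polynomial.hasseDeriv i P).eval x) with hAdef
  have hcard : Nat.card {x : F // ∀ i < s, r i x = (Polynomial.hasseDeriv i P).eval x}
      = A.card := by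
    rw [Nat.card_eq_fintype_card, Fintype.card_subtype]
  rw [hcard] at hA
  -- each x ∈ A has multiplicity ≥ s in Q.roots
  have hmult : ∀ x ∈ A, s ≤ Q.roots.count x := by
    intro x hx
    rw [hAdef, Finset.mem_filter] at hx
    rw [Polynomial.count_roots]
    exact le_rootMultiplicity_of_hasseDeriv Q hQ x s (hvanish x hx.2)
  have hsub : A ⊆ Q.roots.toFinset := by
    intro x hx
    rw [Multiset.mem_toFinset, ← Multiset.count_pos]
    exact lt_of_lt_of_le hs (hmult x hx)
  have hsum : s * A.card ≤ Multiset.card Q.roots := by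
    calc s * A.card = ∑ _x ∈ A, s := by rw [Finset.sum_const, smul_eq_mul, mul_comm]
    _ ≤ ∑ x ∈ A, Q.roots.count x := Finset.sum_le_sum hmult
    _ ≤ ∑ x ∈ Q.roots.toFinset, Q.roots.count x :=
        Finset.sum_le_sum_of_subset hsub
    _ = Multiset.card Q.roots := Q.roots.toFinset_sum_count_eq
  have hroots : Multiset.card Q.roots ≤ Q.natDegree := Q.card_roots'
  have hfin : 2 * (s * A.card) ≤ 2 * Q.natDegree :=
    Nat.mul_le_mul_left 2 (hsum.trans hroots)
  rw [mul_assoc] at hA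
  omega
end

section
/- Let q be a prime power and let c, m be positive integers. For every function f assigning to each point a ∈ F_q^m and each vector i of nonnegative integers with wt(i) < c an element f(a, i) ∈ F_q, there exists a polynomial P ∈ F_q[X_1,...,X_m] of total degree at most (c+m)·q such that P^{(i)}(a) = f(a, i) for every a ∈ F_q^m and every i with wt(i) < c. -/
open MvPolynomial

namespace HermiteAux

variable {F : Type*} [Field F] [Fintype F] {m : ℕ}

/-- Substitution `X_k ↦ C (a k) + X_k`, as a ring hom. -/
noncomputable def shiftHom (a : Fin m → F) :
    MvPolynomial (Fin m) F →+* MvPolynomial (Fin m) F :=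
  MvPolynomial.eval₂Hom MvPolynomial.C (fun k => MvPolynomial.C (a k) + MvPolynomial.X k)

lemma eval_mvHasseDeriv (a : Fin m → F) (i : Fin m → ℕ) (P : MvPolynomial (Fin m) F) :
    MvPolynomial.eval a (mvHasseDeriv i P)
      = MvPolynomial.coeff (Finsupp.equivFunOnFinite.symm i) (shiftHom a P) := by
  have h1 : ((MvPolynomial.map (MvPolynomial.eval a)).comp
      ((MvPolynomial.C (σ := Fin m) (R := MvPolynomial (Fin m) F)).comp
        (MvPolynomial.C (σ := Fin m) (R := F))))
      = (MvPolynomial.C : F →+* MvPolynomial (Fin m) F) := by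
    ext r
    simp
  have h2 : (⇑(MvPolynomial.map (MvPolynomial.eval a)) ∘
      fun k : Fin m => MvPolynomial.C (MvPolynomial.X (R := F) k) + MvPolynomial.X k)
      = fun k => MvPolynomial.C (a k) + MvPolynomial.X k := by
    funext k
    simp
  unfold mvHasseDeriv
  rw [← MvPolynomial.coeff_map, MvPolynomial.eval₂_comp_left
      (MvPolynomial.map (MvPolynomial.eval a)), h1, h2]
  rfl

lemma coeff_zero_shiftHom (a : Fin m → F) (P : MvPolynomial (Fin m) F) :
    MvPolynomial.coeff 0 (shiftHom a P) = MvPolynomial.eval a P := by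
  have h1 : ((MvPolynomial.constantCoeff (σ := Fin m) (R := F)).comp
      (MvPolynomial.C (σ := Fin m) (R := F))) = RingHom.id F := by
    ext r; simp
  have : MvPolynomial.constantCoeff (shiftHom a P) = MvPolynomial.eval a P := by
    rw [shiftHom, MvPolynomial.coe_eval₂Hom, MvPolynomial.eval₂_comp_left
        (MvPolynomial.constantCoeff), h1]
    congr 1
    funext k
    simp
  exact this

lemma shiftHom_X_sub (a : Fin m → F) (k : Fin m) :
    shiftHom a (X k ^ Fintype.card F - X k) = X k ^ Fintype.card F - X k := by
  haveI := ringChar.charP F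
  obtain ⟨n, hp, hq⟩ := FiniteField.card F (ringChar F)
  haveI : Fact (Nat.Prime (ringChar F)) := ⟨hp⟩
  have hX : shiftHom a (X k) = C (a k) + X k := by
    simp [shiftHom]
  rw [map_sub, map_pow, hX, hq, add_pow_char_pow, ← hq, ← C_pow, FiniteField.pow_card]
  ring

/-- `B u = ∏ (X_k^q - X_k)^{u_k}` : vanishes with multiplicity `∑ u` everywhere. -/
noncomputable def Bpoly (u : Fin m →₀ ℕ) : MvPolynomial (Fin m) F :=
  ∏ k, (X k ^ Fintype.card F - X k) ^ u k

lemma shiftHom_Bpoly (a : Fin m → F) (u : Fin m →₀ ℕ) :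
    shiftHom a (Bpoly u) = Bpoly u := by
  rw [Bpoly, map_prod]
  exact Finset.prod_congr rfl fun k _ => by rw [map_pow, shiftHom_X_sub]

lemma Bpoly_eq (u : Fin m →₀ ℕ) :
    (Bpoly u : MvPolynomial (Fin m) F)
      = (∏ k, (X k ^ (Fintype.card F - 1) - 1) ^ u k) * monomial u (1 : F) := by
  rw [Bpoly, monomial_eq, C_1, one_mul,
    Finsupp.prod_fintype _ _ (fun i => pow_zero _), ← Finset.prod_mul_distrib]
  refine Finset.prod_congr rfl fun k _ => ?_
  rw [← mul_pow]
  congr 1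
  rw [sub_mul, one_mul, ← pow_succ, Nat.sub_add_cancel Fintype.card_pos]

lemma coeff_mul_Bpoly_of_not_le (u d : Fin m →₀ ℕ) (P : MvPolynomial (Fin m) F)
    (h : ¬ u ≤ d) : coeff d (P * Bpoly u) = 0 := by
  rw [Bpoly_eq, ← mul_assoc, coeff_mul_monomial', if_neg h]

lemma coeff_mul_Bpoly_self (u : Fin m →₀ ℕ) (P : MvPolynomial (Fin m) F) :
    coeff u (P * Bpoly u) = (-1) ^ (∑ k, u k) * constantCoeff P := by
  have hq : Fintype.card F - 1 ≠ 0 :=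
    Nat.sub_ne_zero_of_lt Fintype.one_lt_card
  rw [Bpoly_eq, ← mul_assoc, coeff_mul_monomial', if_pos le_rfl, tsub_self, mul_one]
  have : (coeff 0 (P * ∏ k, (X k ^ (Fintype.card F - 1) - 1) ^ u k) : F)
      = constantCoeff (P * ∏ k, (X (R := F) k ^ (Fintype.card F - 1) - 1) ^ u k) := rfl
  rw [this, map_mul, map_prod]
  have hcc : ∀ k : Fin m,
      constantCoeff ((X (R := F) k ^ (Fintype.card F - 1) - 1) ^ u k) = (-1) ^ u k := by
    intro k
    rw [map_pow, map_sub, map_one, map_pow, constantCoeff_X, zero_pow hq, zero_sub]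
  rw [Finset.prod_congr rfl fun k _ => hcc k, Finset.prod_pow_eq_pow_sum]
  ring

lemma totalDegree_Bpoly (u : Fin m →₀ ℕ) :
    (Bpoly u : MvPolynomial (Fin m) F).totalDegree ≤ (∑ k, u k) * Fintype.card F := by
  rw [Bpoly]
  refine (totalDegree_finset_prod _ _).trans ?_
  rw [Finset.sum_mul]
  refine Finset.sum_le_sum fun k _ => ?_
  refine (totalDegree_pow _ _).trans ?_
  refine Nat.mul_le_mul_left _ ?_
  refine (totalDegree_sub _ _).trans (max_le ?_ ?_)
  · simp [totalDegree_X_pow]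
  · simpa [totalDegree_X] using Nat.one_le_iff_ne_zero.mpr (Fintype.card_ne_zero (α := F))

/-- Interpolation of plain values on `F^m`. -/
noncomputable def interp (g : (Fin m → F) → F) : MvPolynomial (Fin m) F :=
  ∑ b : Fin m → F, C (g b) * indicator b

lemma eval_interp (g : (Fin m → F) → F) (a : Fin m → F) :
    eval a (interp g) = g a := by
  rw [interp, map_sum]
  rw [Finset.sum_eq_single_of_mem a (Finset.mem_univ a)]
  · rw [map_mul, eval_C, eval_indicator_apply_eq_one, mul_one]
  · intro b _ hb
    rw [map_mul, eval_indicator_apply_eq_zero a b (Ne.symm hb), mul_zero]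

lemma totalDegree_interp (g : (Fin m → F) → F) :
    (interp g).totalDegree ≤ m * (Fintype.card F - 1) := by
  rw [interp]
  refine (totalDegree_finset_sum _ _).trans ?_
  refine Finset.sup_le fun b _ => ?_
  refine (totalDegree_mul _ _).trans ?_
  rw [totalDegree_C, zero_add, indicator]
  refine (totalDegree_finset_prod _ _).trans ?_
  have : ∀ k : Fin m,
      (1 - (X k - C (b k)) ^ (Fintype.card F - 1) : MvPolynomial (Fin m) F).totalDegree
        ≤ Fintype.card F - 1 := by
    intro k
    refine (totalDegree_sub _ _).trans ?_
    rw [totalDegree_one]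
    refine max_le (Nat.zero_le _) ?_
    refine (totalDegree_pow _ _).trans ?_
    have h1 : (X k - C (b k) : MvPolynomial (Fin m) F).totalDegree ≤ 1 := by
      refine (totalDegree_sub _ _).trans ?_
      simp [totalDegree_X]
    calc (Fintype.card F - 1) * (X k - C (b k)).totalDegree
        ≤ (Fintype.card F - 1) * 1 := Nat.mul_le_mul_left _ h1
      _ = _ := Nat.mul_one _
  refine (Finset.sum_le_sum fun k _ => this k).trans ?_
  simp [mul_comm]

lemma finsupp_eq_of_le_of_sum_le (u d : Fin m →₀ ℕ) (h : u ≤ d)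
    (hs : (∑ k, d k) ≤ ∑ k, u k) : d = u := by
  have hle : ∀ k ∈ Finset.univ, u k ≤ d k := fun k _ => h k
  have hsum : (∑ k, u k) = ∑ k, d k :=
    le_antisymm (Finset.sum_le_sum hle) hs
  ext k
  exact ((Finset.sum_eq_sum_iff_of_le hle).mp hsum k (Finset.mem_univ k)).symm

lemma main_ind (c : ℕ) (f : (Fin m → F) → (Fin m →₀ ℕ) → F) :
    ∃ P : MvPolynomial (Fin m) F,
      P.totalDegree ≤ m * (Fintype.card F - 1) + c * Fintype.card F ∧
      ∀ (a : Fin m → F) (d : Fin m →₀ ℕ), (∑ k, d k) ≤ c →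
        coeff d (shiftHom a P) = f a d := by
  induction c generalizing f with
  | zero =>
    refine ⟨interp (fun a => f a 0), ?_, ?_⟩
    · simpa using (totalDegree_interp (fun a => f a 0))
    · intro a d hd
      have hd0 : d = 0 := by
        ext k
        have h1 : d k ≤ ∑ x : Fin m, d x :=
          Finset.single_le_sum (f := fun x => d x) (fun i _ => Nat.zero_le _) (Finset.mem_univ k)
        simp only [Finsupp.coe_zero, Pi.zero_apply]
        omega
      subst hd0
      rw [coeff_zero_shiftHom, eval_interp]
  | succ c ih =>
    obtain ⟨P, hdeg, hP⟩ := ih f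
    set g : (Fin m → ℕ) → (Fin m → F) → F := fun u a =>
      (-1 : F) ^ (c + 1) * (f a (Finsupp.equivFunOnFinite.symm u)
        - coeff (Finsupp.equivFunOnFinite.symm u) (shiftHom a P)) with hg
    set S : Finset (Fin m → ℕ) :=
      (Fintype.piFinset fun _ : Fin m => Finset.range (c + 2)).filter
        (fun u => (∑ k, u k) = c + 1) with hS
    have hSsum : ∀ u ∈ S, (∑ k, (Finsupp.equivFunOnFinite.symm u) k) = c + 1 := by
      intro u hu
      simpa using (Finset.mem_filter.mp hu).2
    refine ⟨P + ∑ u ∈ S, interp (g u) * Bpoly (Finsupp.equivFunOnFinite.symm u), ?_, ?_⟩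
    · refine (totalDegree_add _ _).trans (max_le (hdeg.trans ?_) ?_)
      · have h1 : c * Fintype.card F ≤ (c + 1) * Fintype.card F :=
          Nat.mul_le_mul_right _ (Nat.le_succ c)
        omega
      · refine (totalDegree_finset_sum _ _).trans (Finset.sup_le fun u hu => ?_)
        refine (totalDegree_mul _ _).trans ?_
        have h1 := totalDegree_interp (g u)
        have h2 := totalDegree_Bpoly (F := F) (Finsupp.equivFunOnFinite.symm u)
        rw [hSsum u hu] at h2
        omega
    · intro a d hd
      rw [map_add, map_sum, coeff_add]
      have hterm : ∀ u ∈ S,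
          shiftHom a (interp (g u) * Bpoly (Finsupp.equivFunOnFinite.symm u))
          = shiftHom a (interp (g u)) * Bpoly (Finsupp.equivFunOnFinite.symm u) := by
        intro u _
        rw [map_mul, shiftHom_Bpoly]
      rw [Finset.sum_congr rfl hterm, coeff_sum]
      rcases Nat.lt_or_ge (∑ k, d k) (c + 1) with hlt | hge
      · have hzero : ∀ u ∈ S,
            coeff d (shiftHom a (interp (g u)) * Bpoly (Finsupp.equivFunOnFinite.symm u))
              = 0 := by
          intro u hu
          refine coeff_mul_Bpoly_of_not_le _ _ _ ?_
          intro hle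
          have h1 : (∑ k, (Finsupp.equivFunOnFinite.symm u) k) ≤ ∑ k, d k :=
            Finset.sum_le_sum fun k _ => hle k
          have h2 := hSsum u hu
          omega
        rw [Finset.sum_congr rfl hzero, Finset.sum_const_zero, add_zero]
        exact hP a d (by omega)
      · have hsum_d : (∑ k, d k) = c + 1 := le_antisymm hd hge
        have hmem : ⇑d ∈ S := by
          rw [hS, Finset.mem_filter]
          refine ⟨Fintype.mem_piFinset.mpr fun k => ?_, hsum_d⟩
          rw [Finset.mem_range]
          have h1 : d k ≤ ∑ x : Fin m, d x :=
            Finset.single_le_sum (f := fun x => d x) (fun i _ => Nat.zero_le _) (Finset.mem_univ k)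
          omega
        rw [Finset.sum_eq_single_of_mem (⇑d) hmem ?_]
        · rw [Finsupp.equivFunOnFinite_symm_coe, coeff_mul_Bpoly_self]
          have hcc : constantCoeff (shiftHom a (interp (g ⇑d))) = g (⇑d) a :=
            (coeff_zero_shiftHom a (interp (g ⇑d))).trans (eval_interp _ _)
          rw [hcc, hsum_d, hg]
          simp only [Finsupp.equivFunOnFinite_symm_coe]
          have hpow : (-1 : F) ^ (c + 1) * (-1) ^ (c + 1) = 1 := by
            rw [← pow_add]
            exact Even.neg_one_pow ⟨c + 1, rfl⟩
          linear_combination (f a d - coeff d (shiftHom a P)) * hpow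
        · intro u hu hne
          by_cases hle : (Finsupp.equivFunOnFinite.symm u) ≤ d
          · exfalso
            have h2 := hSsum u hu
            have hdu : d = Finsupp.equivFunOnFinite.symm u :=
              finsupp_eq_of_le_of_sum_le _ _ hle (by omega)
            apply hne
            rw [hdu]
            funext k
            simp
          · exact coeff_mul_Bpoly_of_not_le _ _ _ hle

end HermiteAux

/-- **Multivariate Hermite interpolation with order-`c` data at all points of `F_q^m`.**
For every assignment `f` of field elements to pairs `(a, i)` with `a ∈ F_q^m` and `wt(i) < c`,
there exists `P ∈ F_q[X_1,…,X_m]` of total degree at most `(c+m)·q` such that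
`P^{(i)}(a) = f(a, i)` whenever `wt(i) < c`. -/
theorem multivariate_hermite_interpolation {F : Type*} [Field F] [Fintype F] {m : ℕ}
    (c : ℕ) (hc : 0 < c) (hm : 0 < m)
    (f : (Fin m → F) → (Fin m → ℕ) → F) :
    ∃ P : MvPolynomial (Fin m) F, P.totalDegree ≤ (c + m) * Fintype.card F ∧
      ∀ (a : Fin m → F) (i : Fin m → ℕ), ∑ k, i k < c →
        MvPolynomial.eval a (mvHasseDeriv i P) = f a i := by
  obtain ⟨P, hdeg, hP⟩ := HermiteAux.main_ind (c - 1) (fun a d => f a ⇑d)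
  refine ⟨P, ?_, ?_⟩
  · refine hdeg.trans ?_
    have h1 : m * (Fintype.card F - 1) ≤ m * Fintype.card F :=
      Nat.mul_le_mul_left _ (Nat.sub_le _ _)
    have h2 : (c - 1) * Fintype.card F ≤ c * Fintype.card F :=
      Nat.mul_le_mul_right _ (Nat.sub_le _ _)
    have h3 : (c + m) * Fintype.card F = c * Fintype.card F + m * Fintype.card F :=
      Nat.add_mul _ _ _
    omega
  · intro a i hi
    have hsum : (∑ k, (Finsupp.equivFunOnFinite.symm i) k) = ∑ k, i k := by
      simp
    have hcoe : ⇑(Finsupp.equivFunOnFinite.symm i) = i := by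
      funext k
      simp
    rw [HermiteAux.eval_mvHasseDeriv, hP a _ (by omega), hcoe]
end

section
/- Let P ∈ F_2[X_1,...,X_m] be a polynomial with degree at most 1 in each variable, let a ∈ F_2^m, and let s ≥ 1. Then P vanishes at a with multiplicity at least s if and only if P(b) = 0 for every b ∈ F_2^m whose Hamming distance from a is at most s − 1. -/
open MvPolynomial Finset

namespace MultAux

variable {m : ℕ}

/-- `x ^ n = x` in `ZMod 2` for `n ≠ 0`. -/
lemma zmod2_pow (x : ZMod 2) {n : ℕ} (h : n ≠ 0) : x ^ n = x := by
  induction n with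
  | zero => exact absurd rfl h
  | succ k ih =>
    rcases Nat.eq_zero_or_pos k with hk | hk
    · subst hk; simp
    · have hxx : ∀ y : ZMod 2, y * y = y := by decide
      rw [pow_succ, ih (by omega), hxx]

lemma zmod2_add_self (x : ZMod 2) : x + x = 0 := by revert x; decide

/-- the shifted polynomial -/
noncomputable def QP (P : MvPolynomial (Fin m) (ZMod 2)) :
    MvPolynomial (Fin m) (MvPolynomial (Fin m) (ZMod 2)) :=
  MvPolynomial.eval₂ (MvPolynomial.C.comp MvPolynomial.C)
    (fun k => MvPolynomial.C (MvPolynomial.X k) + MvPolynomial.X k) P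

lemma degreeOf_QP_le (P : MvPolynomial (Fin m) (ZMod 2)) (hdeg : ∀ k, P.degreeOf k ≤ 1)
    (k : Fin m) : (QP P).degreeOf k ≤ 1 := by
  rw [QP]
  conv_lhs => rw [P.as_sum]
  rw [eval₂_sum]
  refine le_trans (degreeOf_sum_le _ _ _) ?_
  refine Finset.sup_le fun u hu => ?_
  rw [eval₂_monomial]
  refine le_trans (degreeOf_mul_le _ _ _) ?_
  rw [RingHom.comp_apply, degreeOf_C, zero_add, Finsupp.prod]
  refine le_trans (degreeOf_prod_le _ _ _) ?_
  have hbound : ∀ n ∈ u.support,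
      degreeOf k ((MvPolynomial.C (MvPolynomial.X n) + MvPolynomial.X n :
        MvPolynomial (Fin m) (MvPolynomial (Fin m) (ZMod 2))) ^ u n)
        ≤ u n * (if k = n then 1 else 0) := by
    intro n _
    refine le_trans (degreeOf_pow_le _ _ _) ?_
    gcongr
    refine le_trans (degreeOf_add_le _ _ _) ?_
    rw [degreeOf_C, degreeOf_X]
    simp
  refine le_trans (Finset.sum_le_sum hbound) ?_
  by_cases hk : k ∈ u.support
  · rw [Finset.sum_eq_single k]
    · simpa using le_trans (monomial_le_degreeOf k hu) (hdeg k)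
    · intro n _ hn; simp [Ne.symm hn]
    · intro h; exact absurd hk h
  · refine le_trans (le_of_eq (Finset.sum_eq_zero ?_)) zero_le_one
    intro n hn
    have : k ≠ n := fun h => hk (h ▸ hn)
    simp [this]

lemma eval_QP (P : MvPolynomial (Fin m) (ZMod 2)) (a e : Fin m → ZMod 2) :
    MvPolynomial.eval₂ (MvPolynomial.eval a) e (QP P)
      = MvPolynomial.eval (fun k => a k + e k) P := by
  have h : (eval₂Hom (MvPolynomial.eval a) e).comp
      (eval₂Hom (MvPolynomial.C.comp (MvPolynomial.C : ZMod 2 →+* MvPolynomial (Fin m) (ZMod 2)))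
        (fun k => MvPolynomial.C (MvPolynomial.X k) + MvPolynomial.X k))
      = (MvPolynomial.eval (fun k => a k + e k) : MvPolynomial (Fin m) (ZMod 2) →+* ZMod 2) := by
    apply MvPolynomial.ringHom_ext <;> intros <;> simp
  rw [QP, ← coe_eval₂Hom, ← coe_eval₂Hom, ← RingHom.comp_apply, h]

/-- The key expansion: `P(a+e)` as a sum of evaluated Hasse derivatives. -/
lemma key (P : MvPolynomial (Fin m) (ZMod 2)) (a e : Fin m → ZMod 2) :
    MvPolynomial.eval (fun k => a k + e k) P
      = ∑ d ∈ (QP P).support,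
          MvPolynomial.eval a (MvPolynomial.coeff d (QP P)) * ∏ k ∈ d.support, e k := by
  rw [← eval_QP, eval₂_eq]
  refine Finset.sum_congr rfl fun d hd => ?_
  congr 1
  refine Finset.prod_congr rfl fun k hk => ?_
  exact zmod2_pow _ (Finsupp.mem_support_iff.mp hk)

lemma support_le (P : MvPolynomial (Fin m) (ZMod 2)) (hdeg : ∀ k, P.degreeOf k ≤ 1)
    {d : Fin m →₀ ℕ} (hd : d ∈ (QP P).support) (k : Fin m) : d k ≤ 1 :=
  le_trans (monomial_le_degreeOf k hd) (degreeOf_QP_le P hdeg k)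

lemma eq_of_support_eq {d d' : Fin m →₀ ℕ} (h1 : ∀ k, d k ≤ 1) (h1' : ∀ k, d' k ≤ 1)
    (hs : d.support = d'.support) : d = d' := by
  ext k
  have := h1 k; have := h1' k
  by_cases hk : k ∈ d.support
  · have hk' : k ∈ d'.support := hs ▸ hk
    have := Finsupp.mem_support_iff.mp hk
    have := Finsupp.mem_support_iff.mp hk'
    omega
  · have hk' : k ∉ d'.support := hs ▸ hk
    have := Finsupp.notMem_support_iff.mp hk
    have := Finsupp.notMem_support_iff.mp hk'
    omega

end MultAux

/-- **Multiplicity versus Hamming balls for multilinear polynomials over `F_2`.**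
If `P ∈ F_2[X_1,…,X_m]` has degree at most `1` in each variable, `a ∈ F_2^m` and `s ≥ 1`,
then `P` vanishes at `a` with multiplicity at least `s` iff `P(b) = 0` for every `b ∈ F_2^m`
at Hamming distance at most `s − 1` from `a`. -/
theorem multilinear_mult_iff_hamming_ball {m : ℕ} (P : MvPolynomial (Fin m) (ZMod 2))
    (hdeg : ∀ k, P.degreeOf k ≤ 1) (a : Fin m → ZMod 2) (s : ℕ) (hs : 1 ≤ s) :
    (s : ℕ∞) ≤ mvMult P a ↔
      ∀ b : Fin m → ZMod 2, hammingDist a b ≤ s - 1 → MvPolynomial.eval b P = 0 := by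
  classical
  have hcoeQ : ∀ i : Fin m → ℕ,
      mvHasseDeriv i P = MvPolynomial.coeff (Finsupp.equivFunOnFinite.symm i) (MultAux.QP P) :=
    fun _ => rfl
  have hstep : (s : ℕ∞) ≤ mvMult P a ↔
      ∀ i : Fin m → ℕ, ((∑ k, i k : ℕ) : ℕ∞) < (s : ℕ∞) →
        MvPolynomial.eval a (mvHasseDeriv i P) = 0 := by
    constructor
    · intro h i hi
      obtain ⟨M, hM, hlt⟩ := lt_sSup_iff.mp (lt_of_lt_of_le hi h)
      exact hM i hlt
    · intro h
      exact le_sSup h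
  rw [hstep]
  constructor
  · -- derivatives vanish ⇒ ball vanishing
    intro h b hb
    set e : Fin m → ZMod 2 := fun k => a k + b k with he
    have hab : (fun k => a k + e k) = b := by
      funext k
      simp only [he, ← add_assoc, MultAux.zmod2_add_self, zero_add]
    have hb' : MvPolynomial.eval b P
        = ∑ d ∈ (MultAux.QP P).support,
            MvPolynomial.eval a (MvPolynomial.coeff d (MultAux.QP P)) * ∏ k ∈ d.support, e k := by
      rw [← hab]; exact MultAux.key P a e
    rw [hb']
    refine Finset.sum_eq_zero fun d hd => ?_
    by_cases hz : ∃ k ∈ d.support, e k = 0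
    · obtain ⟨k, hk, hk0⟩ := hz
      rw [Finset.prod_eq_zero hk hk0, mul_zero]
    · push_neg at hz
      have hsub : d.support ⊆ Finset.univ.filter fun k => a k ≠ b k := by
        intro k hk
        simp only [Finset.mem_filter, Finset.mem_univ, true_and]
        intro hcontra
        refine hz k hk ?_
        simp [he, ← hcontra, MultAux.zmod2_add_self]
      have hdist : (Finset.univ.filter fun k => a k ≠ b k).card = hammingDist a b := rfl
      have hcard : d.support.card ≤ s - 1 := by
        refine le_trans (Finset.card_le_card hsub) ?_
        rw [hdist]; exact hb
      have hwt : (∑ k, (d : Fin m → ℕ) k) = d.support.card := by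
        calc ∑ k, (d : Fin m → ℕ) k
            = ∑ k ∈ d.support, d k :=
              (Finset.sum_subset (Finset.subset_univ _)
                fun x _ hx => Finsupp.notMem_support_iff.mp hx).symm
          _ = ∑ _k ∈ d.support, 1 := Finset.sum_congr rfl fun k hk => by
              have h1 := MultAux.support_le P hdeg hd k
              have h2 := Finsupp.mem_support_iff.mp hk
              omega
          _ = d.support.card := by simp
      have h0 : MvPolynomial.eval a (MvPolynomial.coeff d (MultAux.QP P)) = 0 := by
        have hcd : mvHasseDeriv (⇑d) P = MvPolynomial.coeff d (MultAux.QP P) := by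
          rw [hcoeQ, Finsupp.equivFunOnFinite_symm_coe]
        rw [← hcd]
        refine h (⇑d) ?_
        exact_mod_cast Nat.cast_lt.mpr (by omega : (∑ k, (d : Fin m → ℕ) k) < s)
      rw [h0, zero_mul]
  · -- ball vanishing ⇒ derivatives vanish
    intro h i hi
    have hmain : ∀ n : ℕ, ∀ d ∈ (MultAux.QP P).support, d.support.card ≤ s - 1 →
        d.support.card = n →
        MvPolynomial.eval a (MvPolynomial.coeff d (MultAux.QP P)) = 0 := by
      intro n
      induction n using Nat.strong_induction_on with
      | _ n IH =>
        intro d hd hcard hn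
        set e : Fin m → ZMod 2 := fun k => if k ∈ d.support then 1 else 0 with he
        have hne1 : ∀ x : ZMod 2, ¬ x = x + 1 := by decide
        have hfilter : (Finset.univ.filter fun k => a k ≠ a k + e k) = d.support := by
          ext k
          simp only [Finset.mem_filter, Finset.mem_univ, true_and, he]
          by_cases hk : k ∈ d.support
          · simp only [hk, if_true, iff_true]
            exact hne1 (a k)
          · simp [hk]
        have hball : hammingDist a (fun k => a k + e k) ≤ s - 1 := by
          show (Finset.univ.filter fun k => a k ≠ a k + e k).card ≤ s - 1
          rw [hfilter]; exact hcard
        have hzero : (∑ d' ∈ (MultAux.QP P).support,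
            MvPolynomial.eval a (MvPolynomial.coeff d' (MultAux.QP P))
              * ∏ k ∈ d'.support, e k) = 0 := by
          rw [← MultAux.key P a e]
          exact h _ hball
        have hprod : ∀ d' : Fin m →₀ ℕ,
            (∏ k ∈ d'.support, e k) = if d'.support ⊆ d.support then 1 else 0 := by
          intro d'
          by_cases hsub : d'.support ⊆ d.support
          · rw [if_pos hsub]
            exact Finset.prod_eq_one fun k hk => by simp only [he, if_pos (hsub hk)]
          · rw [if_neg hsub]
            obtain ⟨k, hk, hknot⟩ := Finset.not_subset.mp hsub
            exact Finset.prod_eq_zero hk (by simp only [he, if_neg hknot])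
        have hsum : ∑ d' ∈ (MultAux.QP P).support.filter
              (fun d' => d'.support ⊆ d.support),
            MvPolynomial.eval a (MvPolynomial.coeff d' (MultAux.QP P)) = 0 := by
          rw [Finset.sum_filter]
          calc ∑ d' ∈ (MultAux.QP P).support,
                (if d'.support ⊆ d.support then
                  MvPolynomial.eval a (MvPolynomial.coeff d' (MultAux.QP P)) else 0)
              = ∑ d' ∈ (MultAux.QP P).support,
                  MvPolynomial.eval a (MvPolynomial.coeff d' (MultAux.QP P))
                    * ∏ k ∈ d'.support, e k :=
                Finset.sum_congr rfl fun d' _ => by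
                  rw [hprod d', mul_ite, mul_one, mul_zero]
            _ = 0 := hzero
        rw [Finset.sum_eq_single d
            (fun d' hd' hne => ?_) (fun hnot => absurd
              (Finset.mem_filter.mpr ⟨hd, Finset.Subset.refl _⟩) hnot)] at hsum
        · exact hsum
        · obtain ⟨hd'mem, hd'sub⟩ := Finset.mem_filter.mp hd'
          by_cases hseq : d'.support = d.support
          · exact absurd (MultAux.eq_of_support_eq (MultAux.support_le P hdeg hd'mem)
              (MultAux.support_le P hdeg hd) hseq) hne
          · have hlt : d'.support.card < n := by
              rw [← hn]
              exact Finset.card_lt_card (HasSubset.Subset.ssubset_of_ne hd'sub hseq)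
            exact IH _ hlt d' hd'mem (by omega) rfl
    -- now apply to i
    rw [hcoeQ i]
    set d0 : Fin m →₀ ℕ := Finsupp.equivFunOnFinite.symm i with hd0
    by_cases hd : d0 ∈ (MultAux.QP P).support
    · have hiwt : (∑ k, i k) ≤ s - 1 := by
        have := Nat.cast_lt.mp hi
        omega
      have hcoe : ⇑d0 = i := rfl
      have hcard : d0.support.card ≤ s - 1 := by
        have h1 : d0.support.card ≤ ∑ k ∈ d0.support, d0 k := by
          calc d0.support.card = ∑ _k ∈ d0.support, 1 := by simp
            _ ≤ ∑ k ∈ d0.support, d0 k :=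
              Finset.sum_le_sum fun k hk => Nat.one_le_iff_ne_zero.mpr
                (Finsupp.mem_support_iff.mp hk)
        have h2 : ∑ k ∈ d0.support, d0 k = ∑ k, i k := by
          calc ∑ k ∈ d0.support, d0 k
              = ∑ k, (d0 : Fin m → ℕ) k :=
                Finset.sum_subset (Finset.subset_univ _)
                  fun x _ hx => Finsupp.notMem_support_iff.mp hx
            _ = ∑ k, i k := by rw [hcoe]
        omega
      exact hmain _ d0 hd hcard rfl
    · rw [MvPolynomial.notMem_support_iff.mp hd, map_zero]
end

section
/- Let q be a prime power and let s, d, m be positive integers with d < sq. Then the evaluation map sending each polynomial P ∈ F_q[X_1,...,X_m] of total degree at most d to the tuple (P^{(i)}(a)) indexed by all points a ∈ F_q^m and all vectors i with wt(i) < s is injective. (Equivalently, the multiplicity code of order-s evaluations of degree-d polynomials in m variables over F_q has dimension binom(d+m, m) over F_q.) -/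
/-! ### Auxiliary machinery -/

section Aux

open MvPolynomial

variable {F : Type*} [CommRing F] {n : ℕ}

/-- Coordinate translation `X ↦ X + a` as an algebra homomorphism. -/
noncomputable def mshift (a : Fin n → F) :
    MvPolynomial (Fin n) F →ₐ[F] MvPolynomial (Fin n) F :=
  MvPolynomial.aeval fun k => MvPolynomial.X k + MvPolynomial.C (a k)

lemma mshift_mshift (a b : Fin n → F) (P : MvPolynomial (Fin n) F) :
    mshift a (mshift b P) = mshift (a + b) P := by
  have h : (mshift a).comp (mshift b) = mshift (a + b) := by
    apply MvPolynomial.algHom_ext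
    intro k
    simp [mshift, MvPolynomial.aeval_X, map_add, MvPolynomial.algebraMap_eq,
      MvPolynomial.C_add, add_assoc]
  exact DFunLike.congr_fun h P

lemma mshift_zero (P : MvPolynomial (Fin n) F) : mshift (0 : Fin n → F) P = P := by
  have h : mshift (0 : Fin n → F) = AlgHom.id F _ := by
    apply MvPolynomial.algHom_ext
    intro k
    simp [mshift]
  rw [h, AlgHom.id_apply]

lemma mshift_injective (a : Fin n → F) : Function.Injective (mshift a) := by
  intro P Q h
  have h2 := congrArg (mshift (-a)) h
  rwa [mshift_mshift, mshift_mshift, neg_add_cancel, mshift_zero, mshift_zero] at h2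

lemma mshift_ne_zero (a : Fin n → F) {P : MvPolynomial (Fin n) F} (h : P ≠ 0) :
    mshift a P ≠ 0 := fun hc => h (mshift_injective a (by rw [hc, map_zero]))

/-- Total degree (weight) of a monomial exponent vector. -/
def degf (j : Fin n →₀ ℕ) : ℕ := j.sum fun _ e => e

/-- The minimal weight of a monomial appearing in `Q` (0 if `Q = 0`). -/
noncomputable def mord (Q : MvPolynomial (Fin n) F) : ℕ :=
  sInf {k | ∃ j ∈ Q.support, degf j = k}

lemma exists_mord {Q : MvPolynomial (Fin n) F} (h : Q ≠ 0) :
    ∃ j ∈ Q.support, degf j = mord Q := by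
  have hne : {k | ∃ j ∈ Q.support, degf j = k}.Nonempty := by
    obtain ⟨j, hj⟩ := MvPolynomial.support_nonempty.mpr h
    exact ⟨degf j, j, hj, rfl⟩
  exact Nat.sInf_mem hne

lemma mord_le {Q : MvPolynomial (Fin n) F} {j : Fin n →₀ ℕ} (h : j ∈ Q.support) :
    mord Q ≤ degf j := Nat.sInf_le ⟨j, h, rfl⟩

lemma mord_le_of_coeff (T : MvPolynomial (Fin (n + 1)) F) {e : ℕ}
    {j : Fin n →₀ ℕ}
    (h : MvPolynomial.coeff j ((MvPolynomial.finSuccEquiv F n T).coeff e) ≠ 0) :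
    mord T ≤ e + degf j := by
  have hm : (j.cons e) ∈ T.support := by
    rw [MvPolynomial.mem_support_iff, ← MvPolynomial.finSuccEquiv_coeff_coeff]
    exact h
  have h2 := mord_le hm
  rwa [degf, Finsupp.sum_cons] at h2

/-- Apply `MvPolynomial.coeff i` to each coefficient of a polynomial over
`MvPolynomial (Fin n) F`. -/
noncomputable def lam (i : Fin n →₀ ℕ) (f : Polynomial (MvPolynomial (Fin n) F)) :
    Polynomial F :=
  f.sum fun j c => Polynomial.monomial j (MvPolynomial.coeff i c)

lemma lam_coeff (i : Fin n →₀ ℕ) (f : Polynomial (MvPolynomial (Fin n) F)) (k : ℕ) :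
    (lam i f).coeff k = MvPolynomial.coeff i (f.coeff k) := by
  classical
  rw [lam, Polynomial.sum, Polynomial.finset_sum_coeff]
  simp only [Polynomial.coeff_monomial]
  by_cases hk : k ∈ f.support
  · rw [Finset.sum_eq_single k]
    · simp
    · intro j _ hjk
      simp [hjk]
    · intro hcon; exact absurd hk hcon
  · rw [Finset.sum_eq_zero]
    · have h0 : f.coeff k = 0 := Polynomial.notMem_support_iff.mp hk
      simp [h0]
    · intro j hj
      have hjk : j ≠ k := fun e => hk (e ▸ hj)
      simp [hjk]

lemma lam_add (i : Fin n →₀ ℕ) (f g : Polynomial (MvPolynomial (Fin n) F)) :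
    lam i (f + g) = lam i f + lam i g := by
  ext k
  simp [lam_coeff, MvPolynomial.coeff_add]

lemma lam_monomial (i : Fin n →₀ ℕ) (nn : ℕ) (c : MvPolynomial (Fin n) F) :
    lam i (Polynomial.monomial nn c) = Polynomial.monomial nn (MvPolynomial.coeff i c) := by
  ext k
  rw [lam_coeff]
  simp only [Polynomial.coeff_monomial]
  split_ifs <;> simp

lemma lam_taylor (i : Fin n →₀ ℕ) (b : F) (f : Polynomial (MvPolynomial (Fin n) F)) :
    lam i (Polynomial.taylor (MvPolynomial.C b) f) = Polynomial.taylor b (lam i f) := by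
  induction f using Polynomial.induction_on' with
  | add p q hp hq => rw [map_add, lam_add, lam_add, hp, hq, map_add]
  | monomial nn c =>
    rw [Polynomial.taylor_monomial, lam_monomial, Polynomial.taylor_monomial]
    have hmap : (Polynomial.X + Polynomial.C (MvPolynomial.C b)) ^ nn
        = Polynomial.map (MvPolynomial.C : F →+* MvPolynomial (Fin n) F)
            ((Polynomial.X + Polynomial.C b) ^ nn) := by
      simp
    rw [hmap]
    ext k
    rw [lam_coeff, Polynomial.coeff_C_mul, Polynomial.coeff_C_mul, Polynomial.coeff_map,
      mul_comm c, MvPolynomial.coeff_C_mul, mul_comm]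

/-- The key structural identity: translating coordinates and then separating the first
variable is the same as separating, translating coefficients, and a univariate Taylor
shift. -/
lemma mshift_finSuccEquiv (b : F) (a : Fin n → F) (P : MvPolynomial (Fin (n + 1)) F) :
    MvPolynomial.finSuccEquiv F n (mshift (Fin.cons b a) P)
      = Polynomial.taylor (MvPolynomial.C b)
          (Polynomial.map (mshift a).toRingHom (MvPolynomial.finSuccEquiv F n P)) := by
  have h : ((MvPolynomial.finSuccEquiv F n :
        MvPolynomial (Fin (n + 1)) F →ₐ[F] Polynomial (MvPolynomial (Fin n) F)).comp
          (mshift (Fin.cons b a)))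
      = (((Polynomial.taylorAlgHom (MvPolynomial.C b : MvPolynomial (Fin n) F)).restrictScalars F).comp
          (Polynomial.mapAlgHom (mshift a))).comp
        (MvPolynomial.finSuccEquiv F n :
          MvPolynomial (Fin (n + 1)) F →ₐ[F] Polynomial (MvPolynomial (Fin n) F)) := by
    apply MvPolynomial.algHom_ext
    intro k
    refine Fin.cases ?_ (fun k => ?_) k
    · simp [mshift, Polynomial.taylorAlgHom_apply, Polynomial.mapAlgHom,
        MvPolynomial.finSuccEquiv_X_zero, MvPolynomial.finSuccEquiv_apply,
        Polynomial.taylor_apply]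
    · simp [mshift, Polynomial.taylorAlgHom_apply, Polynomial.mapAlgHom,
        MvPolynomial.finSuccEquiv_X_succ, MvPolynomial.finSuccEquiv_apply,
        Polynomial.taylor_apply]
  exact DFunLike.congr_fun h P

end Aux

section Field

open MvPolynomial

variable {F : Type*} [Field F] [Fintype F]

lemma sum_rootMultiplicity_le {Q : Polynomial F} (hQ : Q ≠ 0) :
    ∑ b : F, Q.rootMultiplicity b ≤ Q.natDegree := by
  classical
  calc ∑ b : F, Q.rootMultiplicity b
      = ∑ b : F, Q.roots.count b := Finset.sum_congr rfl fun b _ => (Q.count_roots).symm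
    _ = ∑ b ∈ Q.roots.toFinset, Q.roots.count b := by
        refine (Finset.sum_subset (Finset.subset_univ _) ?_).symm
        intro b _ hb
        exact Multiset.count_eq_zero.mpr fun h => hb (Multiset.mem_toFinset.mpr h)
    _ = Multiset.card Q.roots := Multiset.toFinset_sum_count_eq _
    _ ≤ Q.natDegree := Q.card_roots'

lemma mshift_step {n : ℕ} (P : MvPolynomial (Fin (n + 1)) F) (hP : P ≠ 0) (a : Fin n → F) :
    ∑ b : F, mord (mshift (Fin.cons b a) P)
      ≤ Fintype.card F * mord (mshift a (MvPolynomial.finSuccEquiv F n P).leadingCoeff)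
        + (MvPolynomial.finSuccEquiv F n P).natDegree := by
  classical
  set p := MvPolynomial.finSuccEquiv F n P with hpdef
  have hp0 : p ≠ 0 := fun h => hP ((map_eq_zero_iff _ (AlgEquiv.injective _)).mp h)
  set t := p.natDegree with ht
  have hpt0 : mshift a p.leadingCoeff ≠ 0 :=
    mshift_ne_zero a (Polynomial.leadingCoeff_ne_zero.mpr hp0)
  obtain ⟨i', hi'mem, hi'deg⟩ := exists_mord hpt0
  set W := p.map (mshift a).toRingHom with hW
  set Q := lam i' W with hQ
  have hQcoeff : ∀ k, Q.coeff k = MvPolynomial.coeff i' (mshift a (p.coeff k)) := by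
    intro k
    rw [hQ, lam_coeff, hW, Polynomial.coeff_map]
    rfl
  have hQt : Q.coeff t ≠ 0 := by
    rw [hQcoeff, ht, Polynomial.coeff_natDegree]
    exact MvPolynomial.mem_support_iff.mp hi'mem
  have hQ0 : Q ≠ 0 := fun h => hQt (by simp [h])
  have hQdeg : Q.natDegree ≤ t := by
    refine Polynomial.natDegree_le_iff_coeff_eq_zero.mpr fun k hk => ?_
    rw [hQcoeff, Polynomial.coeff_eq_zero_of_natDegree_lt hk, map_zero,
      MvPolynomial.coeff_zero]
  have hb : ∀ b : F, mord (mshift (Fin.cons b a) P)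
      ≤ mord (mshift a p.leadingCoeff) + Q.rootMultiplicity b := by
    intro b
    have htQ0 : Polynomial.taylor b Q ≠ 0 := by
      intro hcon
      apply hQ0
      have h2 := congrArg (Polynomial.taylor (-b)) hcon
      rwa [Polynomial.taylor_taylor, neg_add_cancel, Polynomial.taylor_zero, map_zero] at h2
    have hcoef : (Polynomial.taylor b Q).coeff (Polynomial.taylor b Q).natTrailingDegree ≠ 0 :=
      Polynomial.trailingCoeff_nonzero_iff_nonzero.mpr htQ0
    have hkey : Polynomial.taylor b Q
        = lam i' (MvPolynomial.finSuccEquiv F n (mshift (Fin.cons b a) P)) := by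
      rw [mshift_finSuccEquiv, ← hpdef, ← hW, lam_taylor, ← hQ]
    have hcoef2 : MvPolynomial.coeff i'
        ((MvPolynomial.finSuccEquiv F n (mshift (Fin.cons b a) P)).coeff
          ((Polynomial.taylor b Q).natTrailingDegree)) ≠ 0 := by
      rw [← lam_coeff, ← hkey]; exact hcoef
    have h4 := mord_le_of_coeff (mshift (Fin.cons b a) P) hcoef2
    have hrm : Q.rootMultiplicity b = (Polynomial.taylor b Q).natTrailingDegree := by
      rw [Polynomial.rootMultiplicity_eq_natTrailingDegree, Polynomial.taylor_apply]
    rw [hrm, ← hi'deg]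
    omega
  calc ∑ b : F, mord (mshift (Fin.cons b a) P)
      ≤ ∑ _b : F, (mord (mshift a p.leadingCoeff) + Q.rootMultiplicity _b) :=
        Finset.sum_le_sum fun b _ => hb b
    _ = Fintype.card F * mord (mshift a p.leadingCoeff) + ∑ b : F, Q.rootMultiplicity b := by
        rw [Finset.sum_add_distrib, Finset.sum_const, Finset.card_univ, smul_eq_mul]
    _ ≤ Fintype.card F * mord (mshift a p.leadingCoeff) + t :=
        Nat.add_le_add_left ((sum_rootMultiplicity_le hQ0).trans hQdeg) _

/-- Schwartz–Zippel with multiplicities: the total multiplicity of a nonzero polynomial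
over all points of `F^n`, times `|F|`, is at most `deg P * |F|^n`. -/
lemma sz : ∀ (n : ℕ) (P : MvPolynomial (Fin n) F), P ≠ 0 →
    (∑ a : Fin n → F, mord (mshift a P)) * Fintype.card F
      ≤ P.totalDegree * Fintype.card F ^ n := by
  intro n
  induction n with
  | zero =>
    intro P hP
    have hz : ∀ a : Fin 0 → F, mord (mshift a P) = 0 := by
      intro a
      have h0 : mshift a P ≠ 0 := mshift_ne_zero a hP
      obtain ⟨j, _, hjd⟩ := exists_mord h0
      rw [← hjd, Subsingleton.elim j 0]
      simp [degf]
    simp [hz]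
  | succ n ih =>
    intro P hP
    set q := Fintype.card F with hq
    set p := MvPolynomial.finSuccEquiv F n P with hpdef
    have hp0 : p ≠ 0 := fun h => hP ((map_eq_zero_iff _ (AlgEquiv.injective _)).mp h)
    set t := p.natDegree with ht
    set pt := p.leadingCoeff with hpt
    have hpt0 : pt ≠ 0 := Polynomial.leadingCoeff_ne_zero.mpr hp0
    have ih' := ih pt hpt0
    have htd : pt.totalDegree + t ≤ P.totalDegree := by
      have := MvPolynomial.totalDegree_coeff_finSuccEquiv_add_le P t
        (by rw [← hpdef, ht, Polynomial.coeff_natDegree, ← hpt]; exact hpt0)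
      rwa [← hpdef, ht, Polynomial.coeff_natDegree, ← hpt] at this
    set S := ∑ a : Fin n → F, mord (mshift a pt) with hS
    have hsum : (∑ A : Fin (n + 1) → F, mord (mshift A P))
        = ∑ ba : F × (Fin n → F), mord (mshift (Fin.cons ba.1 ba.2) P) :=
      (Fintype.sum_equiv (Fin.consEquiv fun _ => F)
        (fun ba => mord (mshift (Fin.cons ba.1 ba.2) P))
        (fun A => mord (mshift A P)) (fun ba => rfl)).symm
    have h1 : (∑ A : Fin (n + 1) → F, mord (mshift A P)) ≤ q * S + q ^ n * t := by
      rw [hsum, Fintype.sum_prod_type, Finset.sum_comm]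
      calc ∑ a : Fin n → F, ∑ b : F, mord (mshift (Fin.cons b a) P)
          ≤ ∑ a : Fin n → F, (q * mord (mshift a pt) + t) :=
            Finset.sum_le_sum fun a _ => mshift_step P hP a
        _ = q * S + q ^ n * t := by
            rw [Finset.sum_add_distrib, ← Finset.mul_sum, Finset.sum_const, Finset.card_univ,
              smul_eq_mul, ← hS]
            congr 1
            rw [Fintype.card_fun, Fintype.card_fin, hq]
    calc (∑ A : Fin (n + 1) → F, mord (mshift A P)) * q
        ≤ (q * S + q ^ n * t) * q := Nat.mul_le_mul_right _ h1
      _ = (S * q) * q + t * (q ^ n * q) := by ring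
      _ ≤ (pt.totalDegree * q ^ n) * q + t * (q ^ n * q) :=
          Nat.add_le_add_right (Nat.mul_le_mul_right _ ih') _
      _ = (pt.totalDegree + t) * (q ^ n * q) := by ring
      _ ≤ P.totalDegree * (q ^ n * q) := Nat.mul_le_mul_right _ htd
      _ = P.totalDegree * q ^ (n + 1) := by rw [pow_succ]

end Field

section Interface

open MvPolynomial

variable {F : Type*} [CommRing F] {n : ℕ}

lemma eval_mvHasseDeriv (a : Fin n → F) (i : Fin n → ℕ) (P : MvPolynomial (Fin n) F) :
    MvPolynomial.eval a (mvHasseDeriv i P)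
      = MvPolynomial.coeff (Finsupp.equivFunOnFinite.symm i) (mshift a P) := by
  rw [mvHasseDeriv, ← MvPolynomial.coeff_map]
  congr 1
  have h : (MvPolynomial.map (MvPolynomial.eval a :
        MvPolynomial (Fin n) F →+* F)).comp
      (MvPolynomial.eval₂Hom (MvPolynomial.C.comp MvPolynomial.C)
        fun k : Fin n => MvPolynomial.C (MvPolynomial.X k) + MvPolynomial.X k)
      = (mshift a).toRingHom := by
    apply MvPolynomial.ringHom_ext
    · intro r
      simp [mshift, MvPolynomial.algebraMap_eq]
    · intro k
      simp [mshift, MvPolynomial.algebraMap_eq, add_comm]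
  exact DFunLike.congr_fun h P

end Interface

/-- **Injectivity of the multiplicity-code encoding map.**
For positive integers `s, d, m` with `d < sq`, the map sending a polynomial
`P ∈ F_q[X_1,…,X_m]` of total degree at most `d` to the tuple of evaluations `P^{(i)}(a)`,
over all `a ∈ F_q^m` and all `i` with `wt(i) < s`, is injective. -/
theorem multiplicity_code_injective {F : Type*} [Field F] [Fintype F] {m : ℕ}
    (s d : ℕ) (hs : 0 < s) (hd : 0 < d) (hm : 0 < m)
    (hdq : d < s * Fintype.card F) :
    Function.Injective
      (fun P : {P : MvPolynomial (Fin m) F // P.totalDegree ≤ d} =>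
        fun (a : Fin m → F) (i : {i : Fin m → ℕ // ∑ k, i k < s}) =>
          MvPolynomial.eval a (mvHasseDeriv i.1 P.1)) := by
  classical
  intro P P' h
  apply Subtype.ext
  by_contra hne
  set D := P.1 - P'.1 with hD
  have hD0 : D ≠ 0 := sub_ne_zero.mpr hne
  have hDdeg : D.totalDegree ≤ d := by
    refine le_trans (MvPolynomial.totalDegree_sub _ _) ?_
    exact max_le P.2 P'.2
  have hvan : ∀ (a : Fin m → F) (j : Fin m →₀ ℕ), degf j < s →
      MvPolynomial.coeff j (mshift a D) = 0 := by
    intro a j hj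
    have hij : ∑ k, j k < s := by
      have : degf j = ∑ k, j k := Finsupp.sum_fintype _ _ fun _ => rfl
      omega
    have hcong := congrFun (congrFun h a) ⟨(j : Fin m → ℕ), hij⟩
    simp only at hcong
    have e1 : MvPolynomial.coeff j (mshift a P.1)
        = MvPolynomial.eval a (mvHasseDeriv (⇑j) P.1) := by
      rw [eval_mvHasseDeriv, Finsupp.equivFunOnFinite_symm_coe]
    have e2 : MvPolynomial.coeff j (mshift a P'.1)
        = MvPolynomial.eval a (mvHasseDeriv (⇑j) P'.1) := by
      rw [eval_mvHasseDeriv, Finsupp.equivFunOnFinite_symm_coe]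
    rw [hD, map_sub, MvPolynomial.coeff_sub, e1, e2, hcong, sub_self]
  have hord : ∀ a : Fin m → F, s ≤ mord (mshift a D) := by
    intro a
    have h0 : mshift a D ≠ 0 := mshift_ne_zero a hD0
    obtain ⟨j, hjs, hjd⟩ := exists_mord h0
    by_contra hlt
    push_neg at hlt
    exact (MvPolynomial.mem_support_iff.mp hjs) (hvan a j (by omega))
  have hq0 : 0 < Fintype.card F := Fintype.card_pos
  have h3 : s * Fintype.card F ^ m ≤ ∑ a : Fin m → F, mord (mshift a D) := by
    calc s * Fintype.card F ^ m = ∑ _a : Fin m → F, s := by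
          rw [Finset.sum_const, Finset.card_univ, smul_eq_mul, Fintype.card_fun,
            Fintype.card_fin, mul_comm]
      _ ≤ ∑ a : Fin m → F, mord (mshift a D) := Finset.sum_le_sum fun a _ => hord a
  have h2 := sz m D hD0
  have h4 : (s * Fintype.card F ^ m) * Fintype.card F ≤ d * Fintype.card F ^ m :=
    le_trans (Nat.mul_le_mul_right _ h3)
      (le_trans h2 (Nat.mul_le_mul_right _ hDdeg))
  have h5 : (s * Fintype.card F) * Fintype.card F ^ m ≤ d * Fintype.card F ^ m := by
    calc (s * Fintype.card F) * Fintype.card F ^ m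
        = (s * Fintype.card F ^ m) * Fintype.card F := by ring
      _ ≤ d * Fintype.card F ^ m := h4
  have h6 : s * Fintype.card F ≤ d :=
    Nat.le_of_mul_le_mul_right h5 (Nat.pow_pos (n := m) hq0)
  omega
end
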